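/- For scalar positive bounded and coercive spectral densities Φ and Ψ on the unit circle, lim_{β→0} S_B^{(β)}(Φ‖Ψ) = S_IS(Φ‖Ψ), where S_IS(Φ‖Ψ) = ∫ [log Ψ − log Φ + Φ/Ψ − 1] is the Itakura–Saito distance. -/

import Mathlib

open MeasureTheory Real Filter Topology

instance : Fact (0 < 2 * π) := ⟨by positivity⟩

/-- The normalized Lebesgue measure on the unit circle (parametrized as `AddCircle (2π)`). -/
noncomputable def μc : Measure (AddCircle (2 * π)) := (ENNReal.ofReal (2 * π))⁻¹ • (volume : Measure (AddCircle (2 * π)))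

instance : IsFiniteMeasure μc := by
  constructor
  rw [μc, Measure.smul_apply, smul_eq_mul]
  refine ENNReal.mul_lt_top ?_ (measure_lt_top _ _)
  exact ENNReal.inv_lt_top.mpr (ENNReal.ofReal_pos.mpr (by positivity))

private lemma slope_rpow_zero {a : ℝ} (ha : 0 < a) :
    Tendsto (fun β : ℝ => (a ^ β - 1) / β) (𝓝[≠] (0 : ℝ)) (𝓝 (Real.log a)) := by
  have h := (Real.hasStrictDerivAt_const_rpow ha 0).hasDerivAt
  rw [hasDerivAt_iff_tendsto_slope] at h
  simp only [Real.rpow_zero, one_mul] at h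
  refine h.congr' ?_
  filter_upwards [self_mem_nhdsWithin] with β hβ
  rw [slope_def_field]
  norm_num [Real.rpow_zero]

private lemma ptwise {a b : ℝ} (ha : 0 < a) (hb : 0 < b) :
    Tendsto (fun β : ℝ => 1 / (β * (β - 1)) * a ^ β - 1 / (β - 1) * a * b ^ (β - 1) + 1 / β * b ^ β)
      (𝓝[≠] (0 : ℝ)) (𝓝 (Real.log b - Real.log a + a / b - 1)) := by
  have hb0 : Tendsto (fun β : ℝ => b ^ β) (𝓝[≠] (0:ℝ)) (𝓝 1) := by
    have h1 : Tendsto (fun β : ℝ => b ^ β) (𝓝 (0:ℝ)) (𝓝 (b ^ (0:ℝ))) :=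
      Filter.Tendsto.rpow tendsto_const_nhds tendsto_id (Or.inl hb.ne')
    rw [Real.rpow_zero] at h1
    exact h1.mono_left nhdsWithin_le_nhds
  have hb1 : Tendsto (fun β : ℝ => b ^ (β - 1)) (𝓝[≠] (0:ℝ)) (𝓝 (b ^ (-1 : ℝ))) := by
    have hsub : Tendsto (fun β : ℝ => β - 1) (𝓝 (0:ℝ)) (𝓝 (-1 : ℝ)) := by
      have : Tendsto (fun β : ℝ => β - 1) (𝓝 (0:ℝ)) (𝓝 ((0:ℝ) - 1)) :=
        (continuous_id.sub continuous_const).continuousAt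
      simpa using this
    have h1 : Tendsto (fun β : ℝ => b ^ (β - 1)) (𝓝 (0:ℝ)) (𝓝 (b ^ (-1:ℝ))) :=
      Filter.Tendsto.rpow tendsto_const_nhds hsub (Or.inl hb.ne')
    exact h1.mono_left nhdsWithin_le_nhds
  have hden : Tendsto (fun β : ℝ => β - 1) (𝓝[≠] (0:ℝ)) (𝓝 (-1 : ℝ)) := by
    have : Tendsto (fun β : ℝ => β - 1) (𝓝 (0:ℝ)) (𝓝 ((0:ℝ) - 1)) :=
      (continuous_id.sub continuous_const).continuousAt
    simpa using this.mono_left nhdsWithin_le_nhds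
  have h1 : Tendsto
      (fun β : ℝ => ((a ^ β - 1) / β - (b ^ β - 1) / β + b ^ β - a * b ^ (β - 1)) / (β - 1))
      (𝓝[≠] (0:ℝ)) (𝓝 (Real.log b - Real.log a + a / b - 1)) := by
    have hnum := (((slope_rpow_zero ha).sub (slope_rpow_zero hb)).add hb0).sub
      (tendsto_const_nhds.mul hb1 : Tendsto (fun β : ℝ => a * b ^ (β - 1)) _ (𝓝 (a * b ^ (-1:ℝ))))
    have := hnum.div hden (by norm_num)
    convert this using 2
    · rfl
    rw [Real.rpow_neg_one]
    ring
  refine h1.congr' ?_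
  have hsmall : ∀ᶠ β : ℝ in 𝓝[≠] (0:ℝ), |β| < 1 := by
    apply eventually_nhdsWithin_of_eventually_nhds
    have : ∀ᶠ β : ℝ in 𝓝 (0:ℝ), β ∈ Set.Ioo (-1 : ℝ) 1 :=
      Ioo_mem_nhds (by norm_num) (by norm_num)
    filter_upwards [this] with β hβ
    rw [abs_lt]; exact ⟨hβ.1, hβ.2⟩
  filter_upwards [self_mem_nhdsWithin, hsmall] with β hβ0 hβ1
  have hβ0' : β ≠ 0 := hβ0
  have hβ1' : β - 1 ≠ 0 := by
    have : β < 1 := (abs_lt.mp hβ1).2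
    intro h; rw [sub_eq_zero] at h; exact absurd h this.ne
  field_simp
  ring

/-- A uniform bound for the integrand near `β = 0`. -/
private lemma bound_aux {k₁ k₂ : ℝ} (hk₁ : 0 < k₁) (hk₁₂ : k₁ ≤ k₂) :
    ∃ C : ℝ, ∀ᶠ β : ℝ in 𝓝[≠] (0:ℝ), ∀ a b : ℝ, k₁ ≤ a → a ≤ k₂ → k₁ ≤ b → b ≤ k₂ →
      |1 / (β * (β - 1)) * a ^ β - 1 / (β - 1) * a * b ^ (β - 1) + 1 / β * b ^ β| ≤ C := by
  set L : ℝ := max 1 (max |Real.log k₁| |Real.log k₂|) with hL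
  have hL1 : (1 : ℝ) ≤ L := le_max_left _ _
  have hLpos : (0 : ℝ) < L := lt_of_lt_of_le one_pos hL1
  refine ⟨2 * (4 * L + Real.exp 1 + k₂ * Real.exp (2 * L)), ?_⟩
  have hmem : ∀ᶠ β : ℝ in 𝓝[≠] (0:ℝ), |β| ≤ 1 / (2 * L) := by
    apply eventually_nhdsWithin_of_eventually_nhds
    have hpos : (0:ℝ) < 1 / (2 * L) := div_pos one_pos (by linarith)
    have : ∀ᶠ β : ℝ in 𝓝 (0:ℝ), β ∈ Set.Icc (-(1 / (2 * L))) (1 / (2 * L)) :=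
      Icc_mem_nhds (by linarith) hpos
    filter_upwards [this] with β hβ
    rw [abs_le]; exact ⟨hβ.1, hβ.2⟩
  filter_upwards [self_mem_nhdsWithin, hmem] with β hβ0 hβsmall a b ha₁ ha₂ hb₁ hb₂
  have hβ0' : β ≠ 0 := hβ0
  have ha : 0 < a := lt_of_lt_of_le hk₁ ha₁
  have hb : 0 < b := lt_of_lt_of_le hk₁ hb₁
  -- |β| ≤ 1/2
  have hhalf : |β| ≤ 1 / 2 := by
    refine hβsmall.trans ?_
    rw [div_le_div_iff₀ (by positivity) (by norm_num)]
    nlinarith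
  have hβlt1 : β < 1 := lt_of_le_of_lt (le_abs_self β) (lt_of_le_of_lt hhalf (by norm_num))
  have hβ1' : β - 1 ≠ 0 := by
    intro h; rw [sub_eq_zero] at h; exact absurd h hβlt1.ne
  have habs1 : (1:ℝ)/2 ≤ |β - 1| := by
    rw [abs_sub_comm, abs_of_nonneg (by linarith)]
    have := (abs_le.mp hhalf).2
    linarith
  -- bounds on logs
  have hlog : ∀ c : ℝ, k₁ ≤ c → c ≤ k₂ → |Real.log c| ≤ L := by
    intro c hc₁ hc₂
    rw [abs_le]
    constructor
    · have h1 : Real.log k₁ ≤ Real.log c := Real.log_le_log hk₁ hc₁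
      have : -|Real.log k₁| ≤ Real.log k₁ := neg_abs_le _
      have hL' : |Real.log k₁| ≤ L := le_trans (le_max_left _ _) (le_max_right _ _)
      linarith
    · have h1 : Real.log c ≤ Real.log k₂ := Real.log_le_log (lt_of_lt_of_le hk₁ hc₁) hc₂
      have : Real.log k₂ ≤ |Real.log k₂| := le_abs_self _
      have hL' : |Real.log k₂| ≤ L := le_trans (le_max_right _ _) (le_max_right _ _)
      linarith
  -- slope bounds
  have hslope : ∀ c : ℝ, k₁ ≤ c → c ≤ k₂ → |(c ^ β - 1) / β| ≤ 2 * L := by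
    intro c hc₁ hc₂
    have hc : 0 < c := lt_of_lt_of_le hk₁ hc₁
    have hβlog : |β * Real.log c| ≤ 1 := by
      rw [abs_mul]
      calc |β| * |Real.log c| ≤ (1 / (2 * L)) * L :=
            mul_le_mul hβsmall (hlog c hc₁ hc₂) (abs_nonneg _) (by positivity)
        _ = 1 / 2 := by field_simp
        _ ≤ 1 := by norm_num
    have := Real.abs_exp_sub_one_le hβlog
    rw [Real.rpow_def_of_pos hc, mul_comm (Real.log c) β]
    rw [abs_div]
    rw [div_le_iff₀ (abs_pos.mpr hβ0')]
    calc |Real.exp (β * Real.log c) - 1| ≤ 2 * |β * Real.log c| := this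
      _ = 2 * |Real.log c| * |β| := by rw [abs_mul]; ring
      _ ≤ 2 * L * |β| := by
          have := hlog c hc₁ hc₂
          have h0 : (0:ℝ) ≤ |β| := abs_nonneg _
          nlinarith
  -- bound on b ^ β
  have hbβ : |b ^ β| ≤ Real.exp 1 := by
    rw [Real.rpow_def_of_pos hb, abs_of_pos (Real.exp_pos _)]
    apply Real.exp_le_exp.mpr
    calc Real.log b * β ≤ |Real.log b * β| := le_abs_self _
      _ = |Real.log b| * |β| := abs_mul _ _
      _ ≤ L * (1 / (2 * L)) := mul_le_mul (hlog b hb₁ hb₂) hβsmall (abs_nonneg _) hLpos.le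
      _ = 1 / 2 := by field_simp
      _ ≤ 1 := by norm_num
  -- bound on a * b ^ (β - 1)
  have habβ : |a * b ^ (β - 1)| ≤ k₂ * Real.exp (2 * L) := by
    rw [abs_mul, abs_of_pos ha]
    apply mul_le_mul ha₂ _ (abs_nonneg _) (le_trans hk₁.le hk₁₂)
    rw [Real.rpow_def_of_pos hb, abs_of_pos (Real.exp_pos _)]
    apply Real.exp_le_exp.mpr
    calc Real.log b * (β - 1) ≤ |Real.log b * (β - 1)| := le_abs_self _
      _ = |Real.log b| * |β - 1| := abs_mul _ _
      _ ≤ L * 2 := by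
          apply mul_le_mul (hlog b hb₁ hb₂) _ (abs_nonneg _) hLpos.le
          calc |β - 1| ≤ |β| + 1 := by
                have := abs_sub_abs_le_abs_sub β 1
                have := abs_sub β 1
                calc |β - 1| ≤ |β| + |(1:ℝ)| := abs_sub _ _
                  _ = |β| + 1 := by norm_num
            _ ≤ 1 / 2 + 1 := by linarith
            _ ≤ 2 := by norm_num
      _ = 2 * L := by ring
  -- rewrite to combined form
  have hEq : 1 / (β * (β - 1)) * a ^ β - 1 / (β - 1) * a * b ^ (β - 1) + 1 / β * b ^ β =
      ((a ^ β - 1) / β - (b ^ β - 1) / β + b ^ β - a * b ^ (β - 1)) / (β - 1) := by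
    field_simp
    ring
  rw [hEq, abs_div]
  rw [div_le_iff₀ (lt_of_lt_of_le (by norm_num) habs1)]
  have hnum : |(a ^ β - 1) / β - (b ^ β - 1) / β + b ^ β - a * b ^ (β - 1)| ≤
      4 * L + Real.exp 1 + k₂ * Real.exp (2 * L) := by
    have h1 := hslope a ha₁ ha₂
    have h2 := hslope b hb₁ hb₂
    calc |(a ^ β - 1) / β - (b ^ β - 1) / β + b ^ β - a * b ^ (β - 1)|
        ≤ |(a ^ β - 1) / β - (b ^ β - 1) / β + b ^ β| + |a * b ^ (β - 1)| := abs_sub _ _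
      _ ≤ (|(a ^ β - 1) / β - (b ^ β - 1) / β| + |b ^ β|) + |a * b ^ (β - 1)| := by
          have := abs_add_le ((a ^ β - 1) / β - (b ^ β - 1) / β) (b ^ β)
          linarith
      _ ≤ ((|(a ^ β - 1) / β| + |(b ^ β - 1) / β|) + |b ^ β|) + |a * b ^ (β - 1)| := by
          have := abs_sub ((a ^ β - 1) / β) ((b ^ β - 1) / β)
          linarith
      _ ≤ ((2 * L + 2 * L) + Real.exp 1) + k₂ * Real.exp (2 * L) := by
          linarith
      _ = 4 * L + Real.exp 1 + k₂ * Real.exp (2 * L) := by ring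
  calc |(a ^ β - 1) / β - (b ^ β - 1) / β + b ^ β - a * b ^ (β - 1)|
      ≤ 4 * L + Real.exp 1 + k₂ * Real.exp (2 * L) := hnum
    _ = (2 * (4 * L + Real.exp 1 + k₂ * Real.exp (2 * L))) * (1/2) := by ring
    _ ≤ (2 * (4 * L + Real.exp 1 + k₂ * Real.exp (2 * L))) * |β - 1| := by
        apply mul_le_mul_of_nonneg_left habs1
        have hE : (0:ℝ) ≤ Real.exp 1 := (Real.exp_pos _).le
        have hE2 : (0:ℝ) ≤ k₂ * Real.exp (2 * L) :=
          mul_nonneg (by linarith) (Real.exp_pos _).le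
        nlinarith

/-- the Beta divergence tends to the Itakura–Saito distance as β → 0. -/
theorem beta_divergence_limit_zero
    (Φ Ψ : AddCircle (2 * π) → ℝ) (hΦm : Measurable Φ) (hΨm : Measurable Ψ)
    (k₁ k₂ : ℝ) (hk₁ : 0 < k₁)
    (hΦ : ∀ x, k₁ ≤ Φ x ∧ Φ x ≤ k₂) (hΨ : ∀ x, k₁ ≤ Ψ x ∧ Ψ x ≤ k₂) :
    Tendsto (fun β : ℝ => ∫ x, (1 / (β * (β - 1)) * Φ x ^ β - 1 / (β - 1) * Φ x * Ψ x ^ (β - 1) + 1 / β * Ψ x ^ β) ∂μc)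
      (𝓝[≠] (0 : ℝ)) (𝓝 (∫ x, (Real.log (Ψ x) - Real.log (Φ x) + Φ x / Ψ x - 1) ∂μc)) := by
  have hk₁₂ : k₁ ≤ k₂ := le_trans (hΦ 0).1 (hΦ 0).2
  obtain ⟨C, hC⟩ := bound_aux hk₁ hk₁₂
  apply tendsto_integral_filter_of_dominated_convergence (fun _ => C)
  · filter_upwards with β
    apply Measurable.aestronglyMeasurable
    measurability
  · filter_upwards [hC] with β hβ
    exact ae_of_all _ fun x => by
      rw [Real.norm_eq_abs]
      exact hβ (Φ x) (Ψ x) (hΦ x).1 (hΦ x).2 (hΨ x).1 (hΨ x).2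
  · exact integrable_const C
  · exact ae_of_all _ fun x =>
      ptwise (lt_of_lt_of_le hk₁ (hΦ x).1) (lt_of_lt_of_le hk₁ (hΨ x).1)
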